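/- For every integer k, the integral over [0, 2π] of cos(ky) / ((1+r²) + (r²−1)cos(y)) dy equals (π/r)·((1−r)/(1+r))^{|k|}, and the integral of sin(ky) / ((1+r²) + (r²−1)cos(y)) dy equals 0, for any real r with 0 < r < 1. -/

import Mathlib

open Real

private lemma den_pos' {ρ : ℝ} (h0 : 0 < ρ) (h1 : ρ < 1) (y : ℝ) :
    0 < 1 - 2 * ρ * Real.cos y + ρ ^ 2 := by
  nlinarith [Real.neg_one_le_cos y, Real.cos_le_one y, sq_nonneg (1 - ρ), sq_nonneg (ρ - Real.cos y)]

private lemma D_pos' {r : ℝ} (hr0 : 0 < r) (hr1 : r < 1) (y : ℝ) :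
    0 < (1 + r ^ 2) + (r ^ 2 - 1) * Real.cos y := by
  have h1 : r ^ 2 - 1 ≤ 0 := by nlinarith
  have h2 : (r ^ 2 - 1) * Real.cos y ≥ (r ^ 2 - 1) * 1 :=
    mul_le_mul_of_nonpos_left (Real.cos_le_one y) h1
  nlinarith

private lemma intInt' {r : ℝ} (hr0 : 0 < r) (hr1 : r < 1) {g : ℝ → ℝ} (hg : Continuous g)
    (a b : ℝ) :
    IntervalIntegrable (fun y => g y / ((1 + r ^ 2) + (r ^ 2 - 1) * Real.cos y))
      MeasureTheory.volume a b :=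
  (hg.div (by continuity) (fun y => (D_pos' hr0 hr1 y).ne')).intervalIntegrable a b

private lemma antideriv' {ρ : ℝ} (h0 : 0 < ρ) (h1 : ρ < 1) (y : ℝ) :
    HasDerivAt (fun y => y + 2 * Real.arctan (ρ * Real.sin y / (1 - ρ * Real.cos y)))
      ((1 - ρ ^ 2) / (1 - 2 * ρ * Real.cos y + ρ ^ 2)) y := by
  have hp : (0:ℝ) < 1 - ρ * Real.cos y := by
    nlinarith [Real.neg_one_le_cos y, Real.cos_le_one y]
  have hne : (1 : ℝ) - ρ * Real.cos y ≠ 0 := hp.ne'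
  have hden : (1 : ℝ) - 2 * ρ * Real.cos y + ρ ^ 2 ≠ 0 := (den_pos' h0 h1 y).ne'
  have hs := Real.sin_sq_add_cos_sq y
  have h1' : HasDerivAt (fun y => ρ * Real.sin y) (ρ * Real.cos y) y :=
    (Real.hasDerivAt_sin y).const_mul ρ
  have h2' : HasDerivAt (fun y => 1 - ρ * Real.cos y) (ρ * Real.sin y) y := by
    simpa using ((Real.hasDerivAt_cos y).const_mul ρ).const_sub 1
  have hu := (h1'.div h2' hne).arctan
  have e1 : ρ * Real.cos y * (1 - ρ * Real.cos y) - ρ * Real.sin y * (ρ * Real.sin y)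
      = ρ * Real.cos y - ρ ^ 2 := by linear_combination (-ρ^2) * hs
  have e2 : 1 + (ρ * Real.sin y / (1 - ρ * Real.cos y)) ^ 2
      = (1 - 2 * ρ * Real.cos y + ρ ^ 2) / (1 - ρ * Real.cos y) ^ 2 := by
    field_simp
    linear_combination (ρ^2) * hs
  simp only [Pi.div_apply] at hu
  rw [e1, e2] at hu
  have hfull := (hasDerivAt_id y).add (hu.const_mul 2)
  refine hfull.congr_deriv ?_
  field_simp
  ring

private lemma kernel_integral' {ρ : ℝ} (h0 : 0 < ρ) (h1 : ρ < 1) :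
    ∫ y in (0:ℝ)..(2 * π), (1 - ρ ^ 2) / (1 - 2 * ρ * Real.cos y + ρ ^ 2) = 2 * π := by
  have hcont : Continuous fun y => (1 - ρ ^ 2) / (1 - 2 * ρ * Real.cos y + ρ ^ 2) :=
    continuous_const.div (by continuity) (fun y => (den_pos' h0 h1 y).ne')
  rw [intervalIntegral.integral_eq_sub_of_hasDerivAt
      (fun y _ => antideriv' h0 h1 y) (hcont.intervalIntegrable _ _)]
  simp [Real.sin_two_pi, Real.cos_two_pi]

private lemma I0' {r : ℝ} (hr0 : 0 < r) (hr1 : r < 1) :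
    ∫ y in (0:ℝ)..(2 * π), 1 / ((1 + r ^ 2) + (r ^ 2 - 1) * Real.cos y) = π / r := by
  set ρ := (1 - r) / (1 + r) with hρ
  have hr1' : (0:ℝ) < 1 + r := by linarith
  have hρ0 : 0 < ρ := div_pos (by linarith) hr1'
  have hρ1 : ρ < 1 := by rw [hρ, div_lt_one hr1']; linarith
  have hρsq : 1 - ρ ^ 2 = 4 * r / (1 + r) ^ 2 := by
    rw [hρ]; field_simp; ring
  have hρne : 1 - ρ ^ 2 ≠ 0 := by rw [hρsq]; positivity
  have key : ∀ y : ℝ, 1 / ((1 + r ^ 2) + (r ^ 2 - 1) * Real.cos y)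
      = (2 / ((1 + r) ^ 2 * (1 - ρ ^ 2))) * ((1 - ρ ^ 2) / (1 - 2 * ρ * Real.cos y + ρ ^ 2)) := by
    intro y
    have h2 := (den_pos' hρ0 hρ1 y).ne'
    have hid : (1 + r ^ 2) + (r ^ 2 - 1) * Real.cos y
        = (1 + r) ^ 2 / 2 * (1 - 2 * ρ * Real.cos y + ρ ^ 2) := by
      rw [hρ]; field_simp; ring
    rw [hid]
    field_simp
  simp_rw [key]
  rw [intervalIntegral.integral_const_mul, kernel_integral' hρ0 hρ1, hρsq]
  field_simp
  ring

private lemma int_cos_mul' (n : ℕ) :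
    ∫ y in (0:ℝ)..(2 * π), Real.cos ((n + 1 : ℝ) * y) = 0 := by
  have hd : ∀ y ∈ Set.uIcc (0:ℝ) (2 * π),
      HasDerivAt (fun y => Real.sin ((n + 1 : ℝ) * y) / (n + 1))
        (Real.cos ((n + 1 : ℝ) * y)) y := by
    intro y _
    have h : HasDerivAt (fun y => Real.sin ((n + 1 : ℝ) * y))
        (Real.cos ((n + 1 : ℝ) * y) * (n + 1)) y :=
      (Real.hasDerivAt_sin _).comp y (by simpa using (hasDerivAt_id y).const_mul ((n:ℝ) + 1))
    have hne : ((n : ℝ) + 1) ≠ 0 := by positivity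
    refine (h.div_const ((n : ℝ) + 1)).congr_deriv ?_
    field_simp
  rw [intervalIntegral.integral_eq_sub_of_hasDerivAt hd
    (((by continuity : Continuous fun y => Real.cos ((n + 1 : ℝ) * y))).intervalIntegrable _ _)]
  have h1 : ((n : ℝ) + 1) * (2 * π) = (2 * n + 2 : ℕ) * π := by push_cast; ring
  rw [h1, Real.sin_nat_mul_pi]
  simp

private lemma I1' {r : ℝ} (hr0 : 0 < r) (hr1 : r < 1) :
    ∫ y in (0:ℝ)..(2 * π), Real.cos y / ((1 + r ^ 2) + (r ^ 2 - 1) * Real.cos y)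
      = π / r * ((1 - r) / (1 + r)) := by
  have hD := fun y => (D_pos' hr0 hr1 y).ne'
  have key : ∀ y : ℝ, (1:ℝ)
      = (1 + r ^ 2) * (1 / ((1 + r ^ 2) + (r ^ 2 - 1) * Real.cos y))
        + (r ^ 2 - 1) * (Real.cos y / ((1 + r ^ 2) + (r ^ 2 - 1) * Real.cos y)) := by
    intro y
    field_simp
    exact (div_self (hD y)).symm
  have i1 : IntervalIntegrable
      (fun y => (1 + r ^ 2) * (1 / ((1 + r ^ 2) + (r ^ 2 - 1) * Real.cos y)))
      MeasureTheory.volume 0 (2 * π) := (intInt' hr0 hr1 continuous_const _ _).const_mul _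
  have i2 : IntervalIntegrable
      (fun y => (r ^ 2 - 1) * (Real.cos y / ((1 + r ^ 2) + (r ^ 2 - 1) * Real.cos y)))
      MeasureTheory.volume 0 (2 * π) := (intInt' hr0 hr1 Real.continuous_cos _ _).const_mul _
  have h2π : (∫ y in (0:ℝ)..(2 * π), (1:ℝ)) = 2 * π := by simp
  have := h2π
  rw [intervalIntegral.integral_congr (g := fun y =>
      (1 + r ^ 2) * (1 / ((1 + r ^ 2) + (r ^ 2 - 1) * Real.cos y))
        + (r ^ 2 - 1) * (Real.cos y / ((1 + r ^ 2) + (r ^ 2 - 1) * Real.cos y)))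
      (fun y _ => key y)] at this
  rw [intervalIntegral.integral_add i1 i2, intervalIntegral.integral_const_mul,
    intervalIntegral.integral_const_mul, I0' hr0 hr1] at this
  have hrne : r ≠ 0 := hr0.ne'
  have h1r : (1:ℝ) + r ≠ 0 := by positivity
  have hr2 : r ^ 2 - 1 ≠ 0 := by nlinarith
  have := this
  field_simp at this ⊢
  nlinarith [this]

private lemma In' {r : ℝ} (hr0 : 0 < r) (hr1 : r < 1) (n : ℕ) :
    ∫ y in (0:ℝ)..(2 * π), Real.cos (n * y) / ((1 + r ^ 2) + (r ^ 2 - 1) * Real.cos y)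
      = π / r * ((1 - r) / (1 + r)) ^ n := by
  set ρ := (1 - r) / (1 + r) with hρ
  have hrne : r ≠ 0 := hr0.ne'
  have h1r : (1:ℝ) + r ≠ 0 := by positivity
  have hr2 : r ^ 2 - 1 ≠ 0 := by nlinarith
  have hD := fun y => (D_pos' hr0 hr1 y).ne'
  suffices H : ∀ n : ℕ,
      ((∫ y in (0:ℝ)..(2 * π), Real.cos (n * y) / ((1 + r ^ 2) + (r ^ 2 - 1) * Real.cos y))
        = π / r * ρ ^ n) ∧
      ((∫ y in (0:ℝ)..(2 * π), Real.cos ((n+1 : ℕ) * y) / ((1 + r ^ 2) + (r ^ 2 - 1) * Real.cos y))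
        = π / r * ρ ^ (n+1)) by
    exact (H n).1
  intro n
  induction n with
  | zero =>
    constructor
    · simpa using I0' hr0 hr1
    · have := I1' hr0 hr1
      norm_num
      simpa using this
  | succ m ih =>
    refine ⟨ih.2, ?_⟩
    have trig : ∀ y : ℝ, Real.cos (((m:ℝ) + 2) * y)
        = 2 * Real.cos (((m:ℝ) + 1) * y) * Real.cos y - Real.cos ((m:ℝ) * y) := by
      intro y
      have e1 : ((m:ℝ) + 2) * y = ((m:ℝ) + 1) * y + y := by ring
      have e2 : (m:ℝ) * y = ((m:ℝ) + 1) * y - y := by ring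
      rw [e1, e2, Real.cos_add, Real.cos_sub]
      ring
    have key : ∀ y : ℝ, Real.cos (((m:ℝ) + 2) * y) / ((1 + r ^ 2) + (r ^ 2 - 1) * Real.cos y)
        = (2 / (r ^ 2 - 1)) * Real.cos (((m:ℝ) + 1) * y)
          - ((2 * (1 + r ^ 2) / (r ^ 2 - 1))
              * (Real.cos (((m:ℝ) + 1) * y) / ((1 + r ^ 2) + (r ^ 2 - 1) * Real.cos y))
            + Real.cos ((m:ℝ) * y) / ((1 + r ^ 2) + (r ^ 2 - 1) * Real.cos y)) := by
      intro y
      rw [trig y]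
      field_simp [hD y, hr2]
      have hD2 : 1 + r ^ 2 + Real.cos y * (r ^ 2 - 1) ≠ 0 := by rw [mul_comm]; exact hD y
      rw [eq_sub_iff_add_eq, ← add_div, div_eq_iff hD2]
      ring
    have ia : IntervalIntegrable (fun y => (2 / (r ^ 2 - 1)) * Real.cos (((m:ℝ) + 1) * y))
        MeasureTheory.volume 0 (2 * π) :=
      Continuous.intervalIntegrable (by fun_prop) _ _
    have ib : IntervalIntegrable (fun y => (2 * (1 + r ^ 2) / (r ^ 2 - 1))
        * (Real.cos (((m:ℝ) + 1) * y) / ((1 + r ^ 2) + (r ^ 2 - 1) * Real.cos y)))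
        MeasureTheory.volume 0 (2 * π) := (intInt' hr0 hr1 (by fun_prop) _ _).const_mul _
    have ic : IntervalIntegrable
        (fun y => Real.cos ((m:ℝ) * y) / ((1 + r ^ 2) + (r ^ 2 - 1) * Real.cos y))
        MeasureTheory.volume 0 (2 * π) := intInt' hr0 hr1 (by fun_prop) _ _
    have cast2 : ((m + 1 + 1 : ℕ) : ℝ) = (m:ℝ) + 2 := by push_cast; ring
    have cast1 : ((m + 1 : ℕ) : ℝ) = (m:ℝ) + 1 := by push_cast; ring
    rw [show ((m + 1 + 1 : ℕ) : ℝ) = (m:ℝ) + 2 from cast2]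
    rw [intervalIntegral.integral_congr (fun y _ => key y)]
    rw [intervalIntegral.integral_sub ia (ib.add ic), intervalIntegral.integral_add ib ic,
      intervalIntegral.integral_const_mul, intervalIntegral.integral_const_mul]
    rw [int_cos_mul' m]
    have h1 := ih.1
    have h2 := ih.2
    rw [cast1] at h2
    rw [h1, h2]
    have hρ2 : ρ ^ 2 + (2 * (1 + r ^ 2) / (r ^ 2 - 1)) * ρ + 1 = 0 := by
      rw [hρ]
      field_simp
      ring
    have : ρ ^ (m + 1 + 1) = ρ ^ m * ρ ^ 2 := by ring
    rw [this]
    have : ρ ^ (m + 1) = ρ ^ m * ρ := by ring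
    rw [this]
    linear_combination (-(π / r) * ρ ^ m) * hρ2

private lemma Jsin' {r : ℝ} (hr0 : 0 < r) (hr1 : r < 1) (k : ℤ) :
    ∫ y in (0:ℝ)..(2 * π), Real.sin (k * y) / ((1 + r ^ 2) + (r ^ 2 - 1) * Real.cos y) = 0 := by
  set f : ℝ → ℝ := fun y => Real.sin (k * y) / ((1 + r ^ 2) + (r ^ 2 - 1) * Real.cos y) with hf
  have hsub := intervalIntegral.integral_comp_sub_left (a := (0:ℝ)) (b := 2 * π) f (2 * π)
  have hs0 : Real.sin ((k:ℝ) * (2 * π)) = 0 := by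
    have : (k:ℝ) * (2 * π) = ((2 * k : ℤ) : ℝ) * π := by push_cast; ring
    rw [this, Real.sin_int_mul_pi]
  have hc1 : Real.cos ((k:ℝ) * (2 * π)) = 1 := by
    simpa [mul_comm] using Real.cos_int_mul_two_pi k
  have hneg : ∀ y : ℝ, f (2 * π - y) = - f y := by
    intro y
    simp only [hf]
    have e1 : (k:ℝ) * (2 * π - y) = (k:ℝ) * (2 * π) - (k:ℝ) * y := by ring
    rw [e1, Real.sin_sub, hs0, hc1, Real.cos_sub, Real.cos_two_pi, Real.sin_two_pi]
    ring
  rw [intervalIntegral.integral_congr (g := fun y => -f y) (fun y _ => hneg y)] at hsub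
  rw [intervalIntegral.integral_neg] at hsub
  simp only [sub_zero, sub_self] at hsub
  -- hsub : -∫ f = ∫_{2π-2π}^{2π} ... need care; derive
  have : (∫ y in (0:ℝ)..(2 * π), f y) = 0 := by linarith [hsub.symm.le, hsub.le]
  exact this

theorem integral_cos_sin_over_kernel (r : ℝ) (hr0 : 0 < r) (hr1 : r < 1) (k : ℤ) :
    (∫ y in (0:ℝ)..(2 * π),
        Real.cos (k * y) / ((1 + r ^ 2) + (r ^ 2 - 1) * Real.cos y)
      = π / r * ((1 - r) / (1 + r)) ^ k.natAbs) ∧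
    (∫ y in (0:ℝ)..(2 * π),
        Real.sin (k * y) / ((1 + r ^ 2) + (r ^ 2 - 1) * Real.cos y) = 0) := by
  refine ⟨?_, Jsin' hr0 hr1 k⟩
  have heq : ∀ y : ℝ, Real.cos ((k:ℝ) * y) = Real.cos ((k.natAbs : ℝ) * y) := by
    intro y
    rw [Nat.cast_natAbs]
    rcases abs_choice k with h | h
    · rw [h]
    · rw [h]
      push_cast
      rw [neg_mul, Real.cos_neg]
  simp_rw [heq]
  exact In' hr0 hr1 k.natAbs
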